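/- If G is a d-regular simple graph on n vertices, then the number of independent sets of G satisfies i(G)^{d+1} ≥ (d+2)^n (equivalently, i(G)^{1/n} ≥ (d+2)^{1/(d+1)}). -/

import Mathlib

open Classical Finset

namespace Paper

variable {V : Type*}

/-- The number of cliques (vertex sets inducing complete subgraphs, including
the empty set and singletons) of a graph. -/
noncomputable def cliqueCount [Fintype V] (G : SimpleGraph V) : ℕ :=
  (Finset.univ.filter fun s : Finset V => G.IsClique (s : Set V)).card

/-- The number of cliques of size `t`. -/
noncomputable def cliqueCountSize [Fintype V] (G : SimpleGraph V) (t : ℕ) : ℕ :=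
  (Finset.univ.filter fun s : Finset V => G.IsClique (s : Set V) ∧ s.card = t).card

/-- A finset of vertices is independent if its vertices are pairwise nonadjacent. -/
def IsIndepFinset (G : SimpleGraph V) (s : Finset V) : Prop :=
  (s : Set V).Pairwise fun u v => ¬ G.Adj u v

/-- The number of independent sets (including the empty set) of a graph. -/
noncomputable def indepCount [Fintype V] (G : SimpleGraph V) : ℕ :=
  (Finset.univ.filter fun s : Finset V => IsIndepFinset G s).card

/-- The number of independent sets of size `t`. -/
noncomputable def indepCountSize [Fintype V] (G : SimpleGraph V) (t : ℕ) : ℕ :=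
  (Finset.univ.filter fun s : Finset V => IsIndepFinset G s ∧ s.card = t).card

/-- `S_T`: the set of common neighbors of all vertices of `T`. -/
noncomputable def commonNbrs [Fintype V] (G : SimpleGraph V) (T : Finset V) : Finset V :=
  Finset.univ.filter fun v => ∀ x ∈ T, G.Adj x v

/-- The weight `w(C)` of a clique: the number of common neighbors of its vertices. -/
noncomputable def weight [Fintype V] (G : SimpleGraph V) (T : Finset V) : ℕ :=
  (commonNbrs G T).card

/-- A clique `T` is tight (for max degree bound `r`) if `w(T) = r + 1 - |T|`. -/
def IsTight [Fintype V] (r : ℕ) (G : SimpleGraph V) (T : Finset V) : Prop :=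
  G.IsClique (T : Set V) ∧ weight G T + T.card = r + 1

/-- A cluster is a maximal tight clique. -/
def IsCluster [Fintype V] (r : ℕ) (G : SimpleGraph V) (T : Finset V) : Prop :=
  IsTight r G T ∧ ∀ T' : Finset V, T ⊆ T' → IsTight r G T' → T' = T

/-- The graph `G_T`, obtained from `G` by adding all edges within `S_T` and deleting all
edges between `S_T` and `V(G) \ (T ∪ S_T)`. -/
noncomputable def modGraph [Fintype V] (G : SimpleGraph V) (T : Finset V) : SimpleGraph V :=
  SimpleGraph.fromRel fun u v =>
    (u ∈ commonNbrs G T ∧ v ∈ commonNbrs G T) ∨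
    (G.Adj u v ∧ ¬(u ∈ commonNbrs G T ∧ v ∉ T ∪ commonNbrs G T) ∧
      ¬(v ∈ commonNbrs G T ∧ u ∉ T ∪ commonNbrs G T))

/-- The graph `R_T`: the complement of the subgraph of `G` induced on `S_T`. -/
noncomputable def RT [Fintype V] (G : SimpleGraph V) (T : Finset V) :
    SimpleGraph ((commonNbrs G T : Finset V) : Set V) :=
  (SimpleGraph.induce ((commonNbrs G T : Finset V) : Set V) G)ᶜ

/-- `δ_I`: the minimum degree in `R` over the vertices of `I`. -/
noncomputable def minDegOn {W : Type*} [Fintype W] (R : SimpleGraph W) (I : Finset W) : ℕ :=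
  sInf ((fun x => R.degree x) '' (I : Set W))

/-- The fixed loss `φ(R) = Σ_{∅ ≠ I independent} (2 ^ δ_I - 1)`. -/
noncomputable def fixedLoss {W : Type*} [Fintype W] (R : SimpleGraph W) : ℕ :=
  ∑ I ∈ Finset.univ.filter (fun I : Finset W => I.Nonempty ∧ IsIndepFinset R I),
    (2 ^ minDegOn R I - 1)

/-- The disjoint union of `a` copies of `K_{r+1}` together with one copy of `K_b`. -/
noncomputable def kUnion (a r b : ℕ) : SimpleGraph ((Fin a × Fin (r + 1)) ⊕ Fin b) :=
  SimpleGraph.fromRel fun x y =>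
    match x, y with
    | Sum.inl (i, _), Sum.inl (j, _) => i = j
    | Sum.inr _, Sum.inr _ => True
    | _, _ => False

/-- The disjoint union of `a` copies of `K_3` together with one copy of the cycle `C_m`. -/
noncomputable def triCyc (a m : ℕ) : SimpleGraph ((Fin a × Fin 3) ⊕ Fin m) :=
  SimpleGraph.fromRel fun x y =>
    match x, y with
    | Sum.inl (i, _), Sum.inl (j, _) => i = j
    | Sum.inr u, Sum.inr v => (u.val + 1) % m = v.val
    | _, _ => False

end Paper

open Paper

set_option linter.unusedSectionVars false

section Greedy
variable {W : Type*} [Fintype W]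

noncomputable def indepSets (H : SimpleGraph W) (t : ℕ) : Finset (Finset W) :=
  Finset.univ.filter fun s => IsIndepFinset H s ∧ s.card = t

lemma indep_mono {H : SimpleGraph W} {s t : Finset W} (h : IsIndepFinset H s) (hts : t ⊆ s) :
    IsIndepFinset H t := Set.Pairwise.mono (by exact_mod_cast hts) h

lemma indep_insert {H : SimpleGraph W} {I : Finset W} {v : W} (hI : IsIndepFinset H I)
    (hadj : ∀ u ∈ I, ¬ H.Adj u v) : IsIndepFinset H (insert v I) := by
  rw [IsIndepFinset, Finset.coe_insert]
  have hsymm : Symmetric (fun u v : W => ¬ H.Adj u v) := fun a b hab h => hab h.symm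
  exact Set.pairwise_insert.2
    ⟨hI, fun u hu _ => ⟨fun h => hadj u hu h.symm, hadj u hu⟩⟩

lemma step (H : SimpleGraph W) (d t : ℕ)
    (hdeg : ∀ u : W, (Finset.univ.filter fun v => H.Adj u v).card ≤ d) :
    (indepSets H t).card * (Fintype.card W - t * (d + 1)) ≤ (t + 1) * (indepSets H (t + 1)).card := by
  classical
  set extS : Finset W → Finset W := fun I => Finset.univ.filter fun v => v ∉ I ∧ IsIndepFinset H (insert v I) with hext
  -- lower bound on each extS I
  have hlow : ∀ I ∈ indepSets H t, Fintype.card W - t * (d + 1) ≤ (extS I).card := by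
    intro I hI
    simp only [indepSets, mem_filter, mem_univ, true_and] at hI
    obtain ⟨hind, hcard⟩ := hI
    set F : Finset W := I ∪ I.biUnion (fun u => Finset.univ.filter fun v => H.Adj u v) with hF
    have hsub : Finset.univ \ F ⊆ extS I := by
      intro v hv
      simp only [mem_sdiff, hF, mem_union, mem_biUnion, mem_filter, mem_univ, true_and,
        not_or, not_exists, not_and] at hv
      obtain ⟨hvI, hvadj⟩ := hv
      simp only [hext, mem_filter, mem_univ, true_and]
      exact ⟨hvI, indep_insert hind (fun u hu => hvadj u hu)⟩
    have hFcard : F.card ≤ t * (d + 1) := by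
      calc F.card ≤ I.card + (I.biUnion (fun u => Finset.univ.filter fun v => H.Adj u v)).card :=
            card_union_le _ _
        _ ≤ I.card + ∑ u ∈ I, (Finset.univ.filter fun v => H.Adj u v).card :=
            Nat.add_le_add_left (card_biUnion_le) _
        _ ≤ t + ∑ u ∈ I, d := by
            rw [hcard]; exact Nat.add_le_add_left (Finset.sum_le_sum fun u _ => hdeg u) _
        _ = t + t * d := by rw [Finset.sum_const, hcard, smul_eq_mul]
        _ = t * (d + 1) := by ring
    calc Fintype.card W - t * (d + 1) ≤ Fintype.card W - F.card :=
          Nat.sub_le_sub_left hFcard _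
      _ = (Finset.univ \ F).card := by rw [card_sdiff, inter_univ, card_univ]
      _ ≤ (extS I).card := card_le_card hsub
  -- injection into pairs (J, v ∈ J)
  have hinj : ((indepSets H t).sigma extS).card ≤ ((indepSets H (t+1)).sigma (fun J => J)).card := by
    apply Finset.card_le_card_of_injOn (fun p => ⟨insert p.2 p.1, p.2⟩)
    · rintro ⟨I, v⟩ hp
      simp only [Finset.mem_coe, mem_sigma, indepSets, mem_filter, mem_univ, true_and, hext] at hp ⊢
      obtain ⟨⟨hind, hcard⟩, hv⟩ := hp
      exact ⟨⟨hv.2, by rw [card_insert_of_notMem hv.1, hcard]⟩, mem_insert_self _ _⟩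
    · rintro ⟨I, v⟩ hp ⟨I', v'⟩ hp' heq
      simp only [Finset.mem_coe, mem_sigma, indepSets, mem_filter, mem_univ, true_and, hext] at hp hp'
      simp only [Sigma.mk.inj_iff, heq_eq_eq] at heq ⊢
      obtain ⟨h1, h2⟩ := heq
      refine ⟨?_, h2⟩
      have : Finset.erase (insert v I) v = Finset.erase (insert v' I') v' := by rw [h1, h2]
      rwa [erase_insert hp.2.1, erase_insert hp'.2.1] at this
  calc (indepSets H t).card * (Fintype.card W - t * (d + 1))
      = ∑ _I ∈ indepSets H t, (Fintype.card W - t * (d + 1)) := by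
        rw [Finset.sum_const, smul_eq_mul]
    _ ≤ ∑ I ∈ indepSets H t, (extS I).card := Finset.sum_le_sum hlow
    _ = ((indepSets H t).sigma extS).card := (Finset.card_sigma _ _).symm
    _ ≤ ((indepSets H (t+1)).sigma (fun J => J)).card := hinj
    _ = ∑ J ∈ indepSets H (t+1), J.card := Finset.card_sigma _ _
    _ = ∑ J ∈ indepSets H (t+1), (t+1) := by
        apply Finset.sum_congr rfl; intro J hJ
        simp only [indepSets, mem_filter] at hJ; exact hJ.2.2
    _ = (indepSets H (t+1)).card * (t+1) := by rw [Finset.sum_const, smul_eq_mul]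
    _ = (t+1) * (indepSets H (t+1)).card := Nat.mul_comm _ _

lemma count_ge (H : SimpleGraph W) (d m : ℕ)
    (hdeg : ∀ u : W, (Finset.univ.filter fun v => H.Adj u v).card ≤ d)
    (hc : m * (d + 1) ≤ Fintype.card W) :
    ∀ t, t ≤ m → (d + 1) ^ t * m.choose t ≤ (indepSets H t).card := by
  intro t
  induction t with
  | zero =>
    intro _
    simp only [pow_zero, Nat.choose_zero_right, mul_one]
    have : (∅ : Finset W) ∈ indepSets H 0 := by
      simp [indepSets, IsIndepFinset]
    exact Finset.card_pos.2 ⟨∅, this⟩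
  | succ t ih =>
    intro hle
    have ht : t ≤ m := Nat.le_of_succ_le hle
    have key := step H d t hdeg
    have h1 : (m - t) * (d + 1) ≤ Fintype.card W - t * (d + 1) := by
      apply Nat.le_sub_of_add_le
      calc (m - t) * (d + 1) + t * (d + 1) = (m - t + t) * (d + 1) := by ring
        _ = m * (d + 1) := by rw [Nat.sub_add_cancel ht]
        _ ≤ Fintype.card W := hc
    have h2 : (d + 1) ^ t * m.choose t * ((m - t) * (d + 1))
        ≤ (indepSets H t).card * (Fintype.card W - t * (d + 1)) :=
      Nat.mul_le_mul (ih ht) h1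
    have h3 : (d + 1) ^ t * m.choose t * ((m - t) * (d + 1))
        = (t + 1) * ((d + 1) ^ (t + 1) * m.choose (t + 1)) := by
      have := Nat.choose_succ_right_eq m t
      calc (d + 1) ^ t * m.choose t * ((m - t) * (d + 1))
          = (d + 1) ^ (t + 1) * (m.choose t * (m - t)) := by ring
        _ = (d + 1) ^ (t + 1) * (m.choose (t + 1) * (t + 1)) := by rw [← this]
        _ = (t + 1) * ((d + 1) ^ (t + 1) * m.choose (t + 1)) := by ring
    have h4 : (t + 1) * ((d + 1) ^ (t + 1) * m.choose (t + 1))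
        ≤ (t + 1) * (indepSets H (t + 1)).card := by
      rw [← h3]; exact le_trans h2 key
    exact Nat.le_of_mul_le_mul_left h4 (Nat.succ_pos t)

lemma sum_le_count (H : SimpleGraph W) (m : ℕ) :
    ∑ t ∈ Finset.range (m + 1), (indepSets H t).card ≤ indepCount H := by
  classical
  have hdisj : ∀ t ∈ Finset.range (m+1), ∀ t' ∈ Finset.range (m+1), t ≠ t' →
      Disjoint (indepSets H t) (indepSets H t') := by
    intro t _ t' _ hne
    refine Finset.disjoint_left.2 fun s hs hs' => hne ?_
    simp only [indepSets, mem_filter] at hs hs'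
    rw [← hs.2.2, hs'.2.2]
  rw [← Finset.card_biUnion hdisj]
  apply Finset.card_le_card
  intro s hs
  simp only [Finset.mem_biUnion, indepSets, mem_filter] at hs
  obtain ⟨t, -, -, hind, -⟩ := hs
  simp [indepCount, hind]

lemma main_bound (H : SimpleGraph W) (d m : ℕ)
    (hdeg : ∀ u : W, (Finset.univ.filter fun v => H.Adj u v).card ≤ d)
    (hc : m * (d + 1) ≤ Fintype.card W) :
    (d + 2) ^ m ≤ indepCount H := by
  have hbin : (d + 2) ^ m = ∑ t ∈ Finset.range (m + 1), (d + 1) ^ t * m.choose t := by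
    have := add_pow (d + 1) 1 m
    simp only [one_pow, mul_one, Nat.cast_id] at this
    rw [show d + 2 = (d + 1) + 1 by ring, this]
  rw [hbin]
  calc ∑ t ∈ Finset.range (m + 1), (d + 1) ^ t * m.choose t
      ≤ ∑ t ∈ Finset.range (m + 1), (indepSets H t).card := by
        apply Finset.sum_le_sum
        intro t htm
        exact count_ge H d m hdeg hc t (Nat.lt_succ_iff.1 (Finset.mem_range.1 htm))
    _ ≤ indepCount H := sum_le_count H m
end Greedy

section Prod
variable {V : Type*} [Fintype V]

def prodGraph (G : SimpleGraph V) (r : ℕ) : SimpleGraph (V × Fin r) where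
  Adj p q := p.2 = q.2 ∧ G.Adj p.1 q.1
  symm := ⟨fun p q h => ⟨h.1.symm, h.2.symm⟩⟩
  loopless := ⟨fun p h => G.loopless.irrefl _ h.2⟩

lemma prodGraph_deg (G : SimpleGraph V) (r d : ℕ) (hreg : G.IsRegularOfDegree d)
    (p : V × Fin r) :
    (Finset.univ.filter fun q => (prodGraph G r).Adj p q).card ≤ d := by
  classical
  have himg : (Finset.univ.filter fun q => (prodGraph G r).Adj p q)
      = (Finset.univ.filter fun v => G.Adj p.1 v).image (fun v => (v, p.2)) := by
    ext ⟨u, j⟩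
    simp only [Finset.mem_filter, Finset.mem_univ, true_and, Finset.mem_image,
      Prod.mk.injEq]
    constructor
    · rintro ⟨h1, h2⟩
      exact ⟨u, h2, rfl, h1⟩
    · rintro ⟨v, hv, rfl, rfl⟩
      exact ⟨rfl, hv⟩
  rw [himg]
  have : (Finset.univ.filter fun v => G.Adj p.1 v).card = d := by
    have h1 : G.neighborFinset p.1 = Finset.univ.filter fun v => G.Adj p.1 v := by
      ext v; simp [SimpleGraph.mem_neighborFinset]
    rw [← h1]
    exact hreg p.1
  calc ((Finset.univ.filter fun v => G.Adj p.1 v).image (fun v => (v, p.2))).card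
      ≤ (Finset.univ.filter fun v => G.Adj p.1 v).card := Finset.card_image_le
    _ = d := this

noncomputable def toFib (s : Finset (V × Fin r)) (i : Fin r) : Finset V :=
  Finset.univ.filter fun v => (v, i) ∈ s

noncomputable def ofFib {r : ℕ} (f : Fin r → Finset V) : Finset (V × Fin r) :=
  Finset.univ.filter fun p => p.1 ∈ f p.2

lemma prodCount (G : SimpleGraph V) (r : ℕ) :
    indepCount (prodGraph G r) = indepCount G ^ r := by
  classical
  have e : {s : Finset (V × Fin r) // IsIndepFinset (prodGraph G r) s}
      ≃ (Fin r → {t : Finset V // IsIndepFinset G t}) := by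
    refine { toFun := fun s i => ⟨toFib s.1 i, ?_⟩,
             invFun := fun f => ⟨ofFib (fun i => (f i).1), ?_⟩,
             left_inv := ?_, right_inv := ?_ }
    · -- fibers are independent
      intro u hu v hv hne hadj
      have hu' : (u, i) ∈ s.1 := by simpa [toFib] using hu
      have hv' : (v, i) ∈ s.1 := by simpa [toFib] using hv
      have hne' : ((u, i) : V × Fin r) ≠ (v, i) := fun h => hne (congrArg Prod.fst h)
      exact s.2 hu' hv' hne' ⟨rfl, hadj⟩
    · -- union of independent fibers is independent
      intro p hp q hq hne hadj
      obtain ⟨hij, hadj'⟩ := hadj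
      have hp' : p.1 ∈ (f p.2).1 := by simpa [ofFib] using hp
      have hq' : q.1 ∈ (f q.2).1 := by simpa [ofFib] using hq
      rw [hij] at hp'
      have hne1 : p.1 ≠ q.1 := fun h => G.loopless.irrefl _ (h ▸ hadj')
      exact (f q.2).2 hp' hq' hne1 hadj'
    · intro s
      apply Subtype.ext
      ext ⟨v, i⟩
      simp [ofFib, toFib]
    · intro f
      funext i
      apply Subtype.ext
      ext v
      simp [ofFib, toFib]
  have h1 : indepCount (prodGraph G r)
      = Fintype.card {s : Finset (V × Fin r) // IsIndepFinset (prodGraph G r) s} :=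
    (Fintype.card_subtype _).symm
  have h2 : indepCount G = Fintype.card {t : Finset V // IsIndepFinset G t} :=
    (Fintype.card_subtype _).symm
  rw [h1, h2, Fintype.card_congr e, Fintype.card_fun, Fintype.card_fin]
end Prod


/-- **Corollary 2.3.** If `G` is `d`-regular on `n` vertices, then
`i(G)^{d+1} ≥ (d+2)^n`, i.e. `i(G)^{1/n} ≥ (d+2)^{1/(d+1)}`. -/
theorem stmt6 {V : Type*} [Fintype V] (n d : ℕ) (hcard : Fintype.card V = n)
    (G : SimpleGraph V) (hreg : G.IsRegularOfDegree d) :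
    (d + 2) ^ n ≤ indepCount G ^ (d + 1) := by
  have hc : n * (d + 1) ≤ Fintype.card (V × Fin (d + 1)) := by
    rw [Fintype.card_prod, Fintype.card_fin, hcard]
  have := main_bound (prodGraph G (d + 1)) d n
    (fun u => prodGraph_deg G (d + 1) d hreg u) hc
  rwa [prodCount G (d + 1)] at this
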